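/- Entropy identity: let φ, g : ℝ → ℝ be continuous, let G(s) = ∫₀^s g(φ(τ)) dτ, let N ≥ 2, and let u : I → ℝ^{N+1} solve the grid system u'(t) = Δ_N(φ∘u(t)) on an interval I. Then for every t ∈ I and every interior index 1 ≤ i ≤ N−1, the function t ↦ G(u_i(t)) is differentiable and d/dt G(u_i(t)) = D⁻( g(φ(u(t)))·D⁺(φ(u(t))) )_i − (D⁻φ(u(t)))_i · (D⁻ g(φ(u(t))))_i, where for w : {0,…,N} → ℝ we write (D⁺w)_i = (w_{i+1} − w_i)/ε, (D⁻w)_i = (w_i − w_{i−1})/ε, and (D⁻(v·D⁺w))_i = ( v_i (D⁺w)_i − v_{i−1}(D⁺w)_{i−1} )/ε. -/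

import Mathlib

/-- The discrete Neumann Laplacian on `{0,…,N}` with mesh `ε = 1/N`:
`(Δ_N w)_i = (w_{i+1} − 2w_i + w_{i−1})/ε²` for `0 < i < N`,
`(Δ_N w)_0 = (w_1 − w_0)/ε²`, `(Δ_N w)_N = (w_{N−1} − w_N)/ε²`. -/
noncomputable def lapN (N : ℕ) (w : Fin (N + 1) → ℝ) (i : Fin (N + 1)) : ℝ :=
  if i.val = 0 then
    (N : ℝ) ^ 2 * (w ⟨min 1 N, by omega⟩ - w ⟨0, by omega⟩)
  else if h : i.val = N then
    (N : ℝ) ^ 2 * (w ⟨N - 1, by omega⟩ - w ⟨N, by omega⟩)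
  else
    (N : ℝ) ^ 2 *
      (w ⟨i.val + 1, by have := i.isLt; omega⟩ - 2 * w i + w ⟨i.val - 1, by omega⟩)

/-- the discrete entropy identity. For `G(s) = ∫₀^s g(φ(τ)) dτ`
and a solution `u` of the grid system, at every interior index `1 ≤ i ≤ N−1`,
`d/dt G(uᵢ(t)) = D⁻(g(φ(u))·D⁺(φ(u)))ᵢ − (D⁻φ(u))ᵢ·(D⁻g(φ(u)))ᵢ`,
with `(D⁺w)ᵢ = (w_{i+1} − wᵢ)/ε`, `(D⁻w)ᵢ = (wᵢ − w_{i−1})/ε`, `1/ε = N`. -/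
theorem stmt9 (φ g : ℝ → ℝ) (hφ : Continuous φ) (hg : Continuous g)
    (N : ℕ) (hN : 2 ≤ N) (I : Set ℝ) (hI : I.OrdConnected)
    (u : ℝ → Fin (N + 1) → ℝ)
    (hu : ∀ t ∈ I, HasDerivWithinAt u (lapN N fun j => φ (u t j)) I t)
    (i : ℕ) (hi1 : 1 ≤ i) (hi2 : i ≤ N - 1) (t : ℝ) (ht : t ∈ I) :
    HasDerivWithinAt (fun s => ∫ τ in (0 : ℝ)..(u s ⟨i, by omega⟩), g (φ τ))
      ((N : ℝ) * (g (φ (u t ⟨i, by omega⟩)) *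
            ((N : ℝ) * (φ (u t ⟨i + 1, by omega⟩) - φ (u t ⟨i, by omega⟩))) -
          g (φ (u t ⟨i - 1, by omega⟩)) *
            ((N : ℝ) * (φ (u t ⟨i, by omega⟩) - φ (u t ⟨i - 1, by omega⟩)))) -
        ((N : ℝ) * (φ (u t ⟨i, by omega⟩) - φ (u t ⟨i - 1, by omega⟩))) *
          ((N : ℝ) * (g (φ (u t ⟨i, by omega⟩)) - g (φ (u t ⟨i - 1, by omega⟩)))))
      I t := by
  have hiN : i < N := by omega
  have hcoord : HasDerivWithinAt (fun s => u s ⟨i, by omega⟩)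
      ((lapN N fun j => φ (u t j)) ⟨i, by omega⟩) I t :=
    (hasDerivWithinAt_pi.mp (hu t ht)) _
  have hc : Continuous fun τ => g (φ τ) := hg.comp hφ
  have hF : HasDerivAt (fun y => ∫ τ in (0 : ℝ)..y, g (φ τ))
      (g (φ (u t ⟨i, by omega⟩))) (u t ⟨i, by omega⟩) := by
    exact intervalIntegral.integral_hasDerivAt_right
      (hc.intervalIntegrable _ _)
      (hc.stronglyMeasurableAtFilter _ _)
      hc.continuousAt
  have hcomp := hF.comp_hasDerivWithinAt t hcoord
  convert hcomp using 1
  · rfl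
  · rfl
  · rfl
  have h0 : (⟨i, by omega⟩ : Fin (N + 1)).val ≠ 0 := by simp; omega
  have hNe : (⟨i, by omega⟩ : Fin (N + 1)).val ≠ N := by simp; omega
  simp only [lapN]
  rw [if_neg h0, dif_neg hNe]
  ring
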